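/- For every integer m ≥ 3, the circulant matrix B_m is invertible (over ℝ) if and only if m is not divisible by 4. -/

import Mathlib

/-- The m×m circulant matrix with entries 1 at positions `j ≡ i+1 (mod m)` and
`j ≡ i−1 (mod m)`, and 0 otherwise. -/
def Bmat (m : ℕ) : Matrix (Fin m) (Fin m) ℝ :=
  Matrix.of fun i j => if j.val = (i.val + 1) % m ∨ j.val = (i.val + m - 1) % m then 1 else 0

open Matrix
open Fin.NatCast

section aux
variable (m : ℕ) [NeZero m]

def Pmat : Matrix (Fin m) (Fin m) ℝ :=
  Matrix.of fun i j => if j = i + 1 then 1 else 0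

variable {m}

lemma eq_add_one_iff (i j : Fin m) : (j = i + 1) ↔ (i = j - 1) := by
  constructor
  · rintro rfl; exact (add_sub_cancel_right i 1).symm
  · rintro rfl; exact (sub_add_cancel j 1).symm

lemma Pmat_mul_transpose : Pmat m * (Pmat m)ᵀ = 1 := by
  ext i j
  simp only [Matrix.mul_apply, Pmat, Matrix.transpose_apply, Matrix.of_apply,
    ite_mul, one_mul, zero_mul, mul_ite, mul_zero,
    Finset.sum_ite_eq', Finset.mem_univ, if_true, Matrix.one_apply]
  by_cases h : i = j <;> simp [h, (add_left_injective (1 : Fin m)).eq_iff, eq_comm]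

lemma Pmat_pow (k : ℕ) :
    (Pmat m) ^ k = Matrix.of fun i j => if j = i + (k : Fin m) then 1 else 0 := by
  induction k with
  | zero => ext i j; simp [Matrix.one_apply, eq_comm]
  | succ k ih =>
    rw [pow_succ, ih]
    ext i j
    simp only [Matrix.mul_apply, Pmat, Matrix.of_apply, eq_add_one_iff, ite_mul, one_mul,
      zero_mul, mul_ite, mul_zero, Finset.sum_ite_eq', Finset.mem_univ, if_true,
      Nat.cast_add, Nat.cast_one]
    have : (j - 1 = i + (k : Fin m)) ↔ (j = i + ((k : Fin m) + 1)) := by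
      rw [sub_eq_iff_eq_add, add_assoc]
    exact if_congr this rfl rfl

lemma Bmat_eq (hm : 3 ≤ m) : Bmat m = Pmat m + (Pmat m)ᵀ := by
  have e1 : (1 : Fin m).val = 1 := by
    rw [Fin.val_one']; exact Nat.mod_eq_of_lt (by omega)
  ext i j
  have h1 : (j = i + 1) ↔ j.val = (i.val + 1) % m := by
    rw [Fin.ext_iff, Fin.val_add, e1]
  have h2 : (i = j + 1) ↔ j.val = (i.val + m - 1) % m := by
    rw [eq_add_one_iff j i, Fin.ext_iff, Fin.sub_def]
    have h3 : m - 1 + i.val = i.val + m - 1 := by omega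
    have e2 : 1 % m = 1 := Nat.mod_eq_of_lt (by omega)
    simp [e1, e2, h3]
  have hx : ¬((j = i + 1) ∧ (i = j + 1)) := by
    rintro ⟨rfl, hc⟩
    rw [add_assoc] at hc
    have h20 : (1 + 1 : Fin m) = 0 := left_eq_add.mp hc
    have hv := congrArg Fin.val h20
    rw [Fin.val_add, e1, Fin.val_zero, Nat.mod_eq_of_lt (by omega)] at hv
    omega
  show (if (j.val = (i.val + 1) % m ∨ j.val = (i.val + m - 1) % m) then (1:ℝ) else 0) = _
  rw [if_congr (show _ ↔ (j = i + 1 ∨ i = j + 1) by rw [h1, h2]) (rfl : (1:ℝ) = 1) rfl]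
  show _ = (if j = i + 1 then (1:ℝ) else 0) + (if i = j + 1 then (1:ℝ) else 0)
  by_cases hA : j = i + 1
  · have hB : ¬ i = j + 1 := fun hB => hx ⟨hA, hB⟩
    rw [if_pos (Or.inl hA), if_pos hA, if_neg hB, add_zero]
  · by_cases hB : i = j + 1
    · rw [if_pos (Or.inr hB), if_neg hA, if_pos hB, zero_add]
    · rw [if_neg (by tauto), if_neg hA, if_neg hB, add_zero]

lemma Pmat_pow_card : (Pmat m) ^ m = 1 := by
  rw [Pmat_pow]
  ext i j
  simp [Matrix.one_apply, eq_comm]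

lemma Pmat_mulVec (v : Fin m → ℝ) (i : Fin m) : (Pmat m *ᵥ v) i = v (i + 1) := by
  simp [Matrix.mulVec, dotProduct, Pmat, ite_mul, Finset.sum_ite_eq, Finset.sum_ite_eq']

lemma Pmat_transpose_mulVec (v : Fin m → ℝ) (i : Fin m) :
    ((Pmat m)ᵀ *ᵥ v) i = v (i - 1) := by
  simp [Matrix.mulVec, dotProduct, Pmat, ite_mul, eq_add_one_iff,
    Finset.sum_ite_eq, Finset.sum_ite_eq']

lemma val_sub_one (hm : 1 < m) (i : Fin m) : (i - 1).val = (i.val + m - 1) % m := by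
  have e1 : (1 : Fin m).val = 1 := by
    rw [Fin.val_one']; exact Nat.mod_eq_of_lt (by omega)
  rw [Fin.sub_def]
  have e2 : 1 % m = 1 := Nat.mod_eq_of_lt (by omega)
  have h3 : m - 1 + i.val = i.val + m - 1 := by omega
  simp [e2, h3]

lemma val_add_one (hm : 1 < m) (i : Fin m) : (i + 1).val = (i.val + 1) % m := by
  have e1 : (1 : Fin m).val = 1 := by
    rw [Fin.val_one']; exact Nat.mod_eq_of_lt (by omega)
  rw [Fin.val_add, e1]

end aux

/-- For every integer `m ≥ 3`, the circulant matrix `B_m` is invertible (over ℝ)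
if and only if `m` is not divisible by 4. -/
theorem Bmat_isUnit_iff_not_four_dvd (m : ℕ) (hm : 3 ≤ m) :
    IsUnit (Bmat m) ↔ ¬ (4 ∣ m) := by
  haveI : NeZero m := ⟨by omega⟩
  constructor
  · intro hU h4
    obtain ⟨k, hk⟩ := h4
    set v : Fin m → ℝ := fun i => if i.val % 4 = 0 then 1 else if i.val % 4 = 2 then -1 else 0
      with hvdef
    have hv0 : Bmat m *ᵥ v = 0 := by
      funext i
      rw [Bmat_eq hm, Matrix.add_mulVec]
      have key : v (i + 1) + v (i - 1) = 0 := by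
        have ha : (i + 1).val % 4 = (i.val + 1) % 4 := by
          rw [val_add_one (by omega), Nat.mod_mod_of_dvd _ ⟨k, hk⟩]
        have hb : (i - 1).val % 4 = (i.val + m - 1) % 4 := by
          rw [val_sub_one (by omega), Nat.mod_mod_of_dvd _ ⟨k, hk⟩]
        simp only [hvdef, ha, hb]
        have hr : i.val % 4 = 0 ∨ i.val % 4 = 1 ∨ i.val % 4 = 2 ∨ i.val % 4 = 3 := by omega
        rcases hr with h | h | h | h
        · rw [show (i.val + 1) % 4 = 1 by omega, show (i.val + m - 1) % 4 = 3 by omega]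
          norm_num
        · rw [show (i.val + 1) % 4 = 2 by omega, show (i.val + m - 1) % 4 = 0 by omega]
          norm_num
        · rw [show (i.val + 1) % 4 = 3 by omega, show (i.val + m - 1) % 4 = 1 by omega]
          norm_num
        · rw [show (i.val + 1) % 4 = 0 by omega, show (i.val + m - 1) % 4 = 2 by omega]
          norm_num
      simp [Pmat_mulVec, Pmat_transpose_mulVec, key]
    obtain ⟨u, hu⟩ := hU
    have hvz : v = 0 := by
      calc v = (1 : Matrix (Fin m) (Fin m) ℝ) *ᵥ v := (Matrix.one_mulVec v).symm
        _ = ((↑u⁻¹ : Matrix (Fin m) (Fin m) ℝ) * ↑u) *ᵥ v := by rw [u.inv_mul]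
        _ = (↑u⁻¹ : Matrix (Fin m) (Fin m) ℝ) *ᵥ (Bmat m *ᵥ v) := by
            rw [Matrix.mulVec_mulVec, hu]
        _ = 0 := by rw [hv0, Matrix.mulVec_zero]
    have : v ⟨0, by omega⟩ = 1 := by simp [hvdef]
    rw [hvz] at this
    simpa using this
  · intro h4
    have hPT : (Pmat m)ᵀ * Pmat m = 1 := mul_eq_one_comm.mp Pmat_mul_transpose
    have hBP : Bmat m * Pmat m = 1 + Pmat m ^ 2 := by
      rw [Bmat_eq hm, Matrix.add_mul, hPT, sq, add_comm]
    obtain ⟨N, hNodd, hQN⟩ : ∃ N, Odd N ∧ (Pmat m ^ 2) ^ N = 1 := by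
      rcases Nat.even_or_odd m with he | ho
      · obtain ⟨k, hk⟩ := he
        have hko : Odd k := by
          rcases Nat.even_or_odd k with ⟨l, hl⟩ | hok
          · exact absurd ⟨l, by omega⟩ h4
          · exact hok
        exact ⟨k, hko, by rw [← pow_mul, show 2 * k = m by omega, Pmat_pow_card]⟩
      · exact ⟨m, ho, by rw [← pow_mul, mul_comm, pow_mul, Pmat_pow_card, one_pow]⟩
    set Q := Pmat m ^ 2 with hQ
    set A := ∑ i ∈ Finset.range N, (-Q) ^ i with hA
    have hgeom : A * (-Q - 1) = (-Q) ^ N - 1 := geom_sum_mul (-Q) N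
    rw [hNodd.neg_pow, hQN] at hgeom
    have h2 : A * (1 + Q) = 2 := by
      have hneg : A * (-(1 + Q)) = -(2) := by
        rw [show -(1 + Q) = -Q - 1 by abel, hgeom, ← one_add_one_eq_two]
        abel
      rw [mul_neg] at hneg
      exact neg_injective hneg
    have hinv : ((2:ℝ)⁻¹ • A) * (1 + Q) = 1 := by
      rw [Matrix.smul_mul, h2, show (2 : Matrix (Fin m) (Fin m) ℝ) = (2:ℝ) • 1 by
        rw [two_smul, one_add_one_eq_two], smul_smul]
      norm_num
    have hU1Q : IsUnit (1 + Q) :=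
      isUnit_iff_exists.mpr ⟨(2:ℝ)⁻¹ • A, mul_eq_one_comm.mp hinv, hinv⟩
    have hUPT : IsUnit (Pmat m)ᵀ :=
      isUnit_iff_exists.mpr ⟨Pmat m, hPT, Pmat_mul_transpose⟩
    have hB : Bmat m = (1 + Q) * (Pmat m)ᵀ := by
      rw [← hBP, Matrix.mul_assoc, Pmat_mul_transpose, Matrix.mul_one]
    rw [hB]
    exact hU1Q.mul hUPT
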